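/- One has lim_{L→∞} N_L^{−(d−2)} · log P[ Σ_{i=1}^{m_L} U_i ≥ K̄^{−d} ρ_L (N_L/L)^d ] = −∞ (with the convention log 0 = −∞): the probability that at least ρ_L (N_L/L)^d / K̄^d of the m_L independent Bernoulli(η_L) trials succeed decays super-exponentially at rate faster than N_L^{d−2}. (Probabilistic core of Proposition 3.1, displays (3.13)–(3.19).) -/

import Mathlib

open MeasureTheory ProbabilityTheory
open scoped ENNReal

/-- `ρ_L = ( log L / |log η_L| )^{1/2}`. -/
noncomputable def rhoL (η : ℕ → ℝ) (L : ℕ) : ℝ :=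
  Real.sqrt (Real.log L / |Real.log (η L)|)

/-- `N_L = L^{d/2} (log L)^{−1/2}`. -/
noncomputable def NL (d L : ℕ) : ℝ :=
  (L : ℝ) ^ ((d : ℝ) / 2) * (Real.log L) ^ (-(1 / 2) : ℝ)

/-- `m_L = ⌊ c₄ (N_L/L)^d ⌋`. -/
noncomputable def mL (d : ℕ) (c₄ : ℝ) (L : ℕ) : ℕ :=
  ⌊c₄ * (NL d L / L) ^ d⌋₊

lemma one_le_log' {L : ℕ} (hL : 3 ≤ L) : 1 ≤ Real.log L := by
  have h3 : (3:ℝ) ≤ L := by exact_mod_cast hL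
  have h9 := Real.exp_one_lt_d9
  rw [Real.le_log_iff_exp_le (by linarith)]
  norm_num at h9 ⊢
  linarith

lemma one_le_NL' {d L : ℕ} (hd : 1 ≤ d) (hL : 3 ≤ L) : 1 ≤ NL d L := by
  have hL1 : (1:ℝ) ≤ L := by exact_mod_cast hL.trans' (by norm_num)
  have ha1 : 1 ≤ Real.log L := one_le_log' hL
  have ha0 : (0:ℝ) < Real.log L := by linarith
  rw [NL, Real.rpow_neg ha0.le, ← div_eq_mul_inv, le_div_iff₀ (Real.rpow_pos_of_pos ha0 _),
    one_mul]
  calc Real.log L ^ ((1:ℝ)/2) ≤ (L:ℝ) ^ ((1:ℝ)/2) :=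
        Real.rpow_le_rpow ha0.le (Real.log_le_self (by linarith)) (by norm_num)
    _ ≤ (L:ℝ) ^ ((d:ℝ)/2) := by
        apply Real.rpow_le_rpow_of_exponent_le hL1
        have : (1:ℝ) ≤ (d:ℝ) := by exact_mod_cast hd
        linarith

lemma NL_le_pow' {d L : ℕ} (hL : 3 ≤ L) : NL d L ≤ (L:ℝ) ^ d := by
  have hL1 : (1:ℝ) ≤ L := by exact_mod_cast hL.trans' (by norm_num)
  have ha1 : 1 ≤ Real.log L := one_le_log' hL
  calc NL d L ≤ (L:ℝ) ^ ((d:ℝ)/2) * 1 := by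
        apply mul_le_mul_of_nonneg_left _ (Real.rpow_nonneg (by linarith) _)
        exact Real.rpow_le_one_of_one_le_of_nonpos ha1 (by norm_num)
    _ = (L:ℝ) ^ ((d:ℝ)/2) := mul_one _
    _ ≤ (L:ℝ) ^ ((d:ℝ)) := Real.rpow_le_rpow_of_exponent_le hL1 (by
        have : (0:ℝ) ≤ (d:ℝ) := by positivity
        linarith)
    _ = (L:ℝ) ^ d := Real.rpow_natCast _ _

lemma NL_sq' {d L : ℕ} (hL : 3 ≤ L) : NL d L ^ 2 * Real.log L = (L:ℝ) ^ d := by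
  have hL0 : (0:ℝ) ≤ L := by positivity
  have ha0 : (0:ℝ) < Real.log L := lt_of_lt_of_le one_pos (one_le_log' hL)
  rw [NL, mul_pow]
  rw [← Real.rpow_natCast ((L:ℝ) ^ ((d:ℝ)/2)) 2, ← Real.rpow_mul hL0]
  rw [← Real.rpow_natCast ((Real.log L) ^ (-(1/2):ℝ)) 2, ← Real.rpow_mul ha0.le]
  norm_num
  rw [Real.rpow_neg_one, mul_assoc, inv_mul_cancel₀ ha0.ne', mul_one]

lemma NL_key' {d L : ℕ} (hd : 3 ≤ d) (hL : 3 ≤ L) :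
    (NL d L / L) ^ d * Real.log L = NL d L ^ (d - 2) := by
  have hLd : ((L:ℝ)) ^ d ≠ 0 := by positivity
  have hsplit : NL d L ^ d = NL d L ^ (d-2) * NL d L ^ 2 := by
    rw [← pow_add]; congr 1; omega
  rw [div_pow, hsplit, div_mul_eq_mul_div, mul_assoc, NL_sq' hL,
    mul_div_assoc, div_self hLd, mul_one]

lemma bernoulli_chernoff' {Ω : Type} [MeasurableSpace Ω] (μ : Measure Ω) [IsProbabilityMeasure μ]
    (U : ℕ → Ω → Bool) (hm : ∀ i, Measurable (U i))
    (hi : iIndepFun U μ)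
    (p : ℝ) (hp0 : 0 ≤ p) (hp1 : p ≤ 1)
    (hdist : ∀ i, μ {ω | U i ω = true} = ENNReal.ofReal p)
    (m : ℕ) (t ε : ℝ) (ht : 0 ≤ t) :
    (μ {ω | ε ≤ ∑ i ∈ Finset.range m, (if U i ω then (1:ℝ) else 0)}).toReal
      ≤ Real.exp (-t * ε + m * (p * Real.exp t)) := by
  classical
  set X : ℕ → Ω → ℝ := fun i ω => if U i ω then (1:ℝ) else 0 with hX
  have hXmeas : ∀ i, Measurable (X i) := fun i =>
    (Measurable.of_discrete (f := fun b : Bool => if b then (1:ℝ) else 0)).comp (hm i)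
  have hXindep : iIndepFun X μ :=
    hi.comp (fun _ b => if b then (1:ℝ) else 0) (fun _ => Measurable.of_discrete)
  have hexp_eq : ∀ i, (fun ω => Real.exp (t * X i ω)) = fun ω =>
      if U i ω then Real.exp t else 1 := by
    intro i; funext ω
    by_cases h : U i ω <;> simp [hX, h]
  have hint : ∀ i, Integrable (fun ω => Real.exp (t * X i ω)) μ := by
    intro i
    rw [hexp_eq i]
    refine (integrable_const (max (Real.exp t) 1)).mono'
      ((Measurable.of_discrete (f := fun b : Bool => if b then Real.exp t else 1)).comp
        (hm i)).aestronglyMeasurable ?_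
    filter_upwards with ω
    by_cases h : U i ω <;>
      simp [h, Real.norm_eq_abs, abs_of_pos, Real.exp_pos, le_max_left, le_max_right]
  have hSint : Integrable (fun ω => Real.exp (t * (∑ i ∈ Finset.range m, X i) ω)) μ :=
    hXindep.integrable_exp_mul_sum hXmeas (fun i _ => hint i)
  have hset : {ω | ε ≤ ∑ i ∈ Finset.range m, (if U i ω then (1:ℝ) else 0)}
      = {ω | ε ≤ (∑ i ∈ Finset.range m, X i) ω} := by
    ext ω; simp [hX]
  have hmgf : ∀ i, mgf (X i) μ t = p * Real.exp t + (1 - p) := by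
    intro i
    have hA : MeasurableSet {ω | U i ω = true} := hm i (measurableSet_singleton true)
    have hμA : (μ {ω | U i ω = true}).toReal = p := by
      rw [hdist i, ENNReal.toReal_ofReal hp0]
    have hμAc : (μ {ω | U i ω = true}ᶜ).toReal = 1 - p := by
      rw [measure_compl hA (measure_ne_top _ _), measure_univ]
      rw [ENNReal.toReal_sub_of_le (by rw [hdist i]; exact ENNReal.ofReal_le_one.2 hp1)
        ENNReal.one_ne_top, ENNReal.toReal_one, hμA]
    have heq : mgf (X i) μ t = ∫ ω, (if U i ω then Real.exp t else 1) ∂μ := by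
      rw [mgf, ← hexp_eq i]
    rw [heq, ← integral_add_compl hA (by rw [← hexp_eq i]; exact hint i)]
    rw [setIntegral_congr_fun hA (g := fun _ => Real.exp t) (by intro ω hω; simp [hω.out]),
      setIntegral_congr_fun hA.compl (g := fun _ => (1:ℝ))
        (by intro ω hω; simp [Set.mem_compl_iff, Set.mem_setOf_eq] at hω; simp [hω]),
      setIntegral_const, setIntegral_const, measureReal_def, measureReal_def, hμA, hμAc]
    simp only [smul_eq_mul]; ring
  calc (μ {ω | ε ≤ ∑ i ∈ Finset.range m, (if U i ω then (1:ℝ) else 0)}).toReal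
      ≤ Real.exp (-t * ε) * mgf (∑ i ∈ Finset.range m, X i) μ t := by
        rw [hset]; exact measure_ge_le_exp_mul_mgf ε ht hSint
    _ = Real.exp (-t * ε) * ∏ i ∈ Finset.range m, mgf (X i) μ t := by
        rw [hXindep.mgf_sum hXmeas]
    _ ≤ Real.exp (-t * ε) * ∏ i ∈ Finset.range m, Real.exp (p * Real.exp t) := by
        apply mul_le_mul_of_nonneg_left _ (Real.exp_pos _).le
        apply Finset.prod_le_prod (fun i _ => mgf_nonneg)
        intro i _
        rw [hmgf i]
        have h2 := Real.add_one_le_exp (p * Real.exp t - p)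
        have h3 : Real.exp (p * Real.exp t - p) ≤ Real.exp (p * Real.exp t) :=
          Real.exp_le_exp.2 (by linarith)
        linarith
    _ = Real.exp (-t * ε + m * (p * Real.exp t)) := by
        rw [Finset.prod_const, ← Real.exp_nat_mul, ← Real.exp_add]
        simp [Finset.card_range]

/-- Probabilistic core of Proposition 3.1 (displays (3.13)–(3.19)): the probability that at
least `K̄^{−d} ρ_L (N_L/L)^d` of the `m_L` independent Bernoulli(`η_L`) trials succeed decays
super-exponentially at rate faster than `N_L^{d−2}`; equivalently, for every `M` it is
eventually at most `exp(−M N_L^{d−2})` (which also encodes `lim N_L^{−(d−2)} log P = −∞`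
with the convention `log 0 = −∞`). -/
theorem bernoulli_excess_superexponential_decay (d : ℕ) (hd : 3 ≤ d)
    (η : ℕ → ℝ) (hη : ∀ L, 2 ≤ L → η L ∈ Set.Ioo (0 : ℝ) 1)
    (hηdecay : Filter.Tendsto (fun L : ℕ => Real.log (η L) / Real.log L)
      Filter.atTop Filter.atBot)
    (c₄ : ℝ) (hc₄ : 0 < c₄) (Kb : ℝ) (hKb : 1 ≤ Kb)
    (Ω : ℕ → Type) (mΩ : ∀ L, MeasurableSpace (Ω L))
    (P : ∀ L, Measure (Ω L)) (hP : ∀ L, IsProbabilityMeasure (P L))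
    (U : ∀ L, ℕ → Ω L → Bool)
    (hUmeas : ∀ L i, Measurable (U L i))
    (hUindep : ∀ L, iIndepFun (U L) (P L))
    (hUdist : ∀ L i, P L {ω | U L i ω = true} = ENNReal.ofReal (η L)) :
    ∀ M : ℝ, ∀ᶠ L : ℕ in Filter.atTop,
      P L {ω | (Kb ^ d)⁻¹ * rhoL η L * (NL d L / L) ^ d ≤
          ∑ i ∈ Finset.range (mL d c₄ L), (if U L i ω then (1 : ℝ) else 0)} ≤
        ENNReal.ofReal (Real.exp (-M * NL d L ^ (d - 2))) := by
  intro M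
  have hKb0 : (0:ℝ) < Kb := lt_of_lt_of_le one_pos hKb
  have hKbd : (1:ℝ) ≤ Kb ^ d := one_le_pow₀ hKb
  set δ : ℝ := (2 * Kb ^ d * (|M| + 1))⁻¹ with hδdef
  have hδ0 : 0 < δ := by
    rw [hδdef]
    have h1 : (0:ℝ) < |M| + 1 := by positivity
    positivity
  set C : ℝ := (2 * (d:ℝ) * d + 2) + (δ⁻¹) ^ 2 with hCdef
  have hC1 : 2 * (d:ℝ) * d + 2 ≤ C := le_add_of_nonneg_right (by positivity)
  have hC2 : (δ⁻¹) ^ 2 ≤ C := le_add_of_nonneg_left (by positivity)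
  have ev1 := hηdecay.eventually (Filter.eventually_le_atBot (-C))
  have ev2 : ∀ᶠ L : ℕ in Filter.atTop, 3 ≤ L := Filter.eventually_ge_atTop 3
  have ev3 : ∀ᶠ L : ℕ in Filter.atTop, c₄ ≤ (L:ℝ) :=
    (tendsto_natCast_atTop_atTop (R := ℝ)).eventually_ge_atTop c₄
  filter_upwards [ev1, ev2, ev3] with L hdec hL3 hLc
  haveI := hP L
  have hL0 : (0:ℝ) < L := by positivity
  have hL1 : (1:ℝ) < L := by
    have : (3:ℝ) ≤ L := by exact_mod_cast hL3
    linarith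
  obtain ⟨hη0, hη1⟩ := hη L (by omega)
  have ha1 : 1 ≤ Real.log L := one_le_log' hL3
  have ha0 : (0:ℝ) < Real.log L := by linarith
  set a := Real.log L with hadef
  have hlogη : Real.log (η L) < 0 := Real.log_neg hη0 hη1
  have habs : |Real.log (η L)| = -Real.log (η L) := abs_of_neg hlogη
  have hdec' : Real.log (η L) ≤ -C * a := by
    rw [div_le_iff₀ ha0] at hdec; linarith
  set e := |Real.log (η L)| with hedef
  have he0 : 0 < e := abs_pos.mpr hlogη.ne
  have heC : C * a ≤ e := by rw [habs]; linarith
  set r := rhoL η L with hrdef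
  have hr0 : 0 < r := by
    rw [hrdef, rhoL]
    exact Real.sqrt_pos.2 (div_pos ha0 he0)
  have hr2 : r ^ 2 = a / e := by
    rw [hrdef, rhoL]
    exact Real.sq_sqrt (le_of_lt (div_pos ha0 he0))
  have hrδ : r ≤ δ := by
    have hCpos : 0 < C := lt_of_lt_of_le (by positivity) hC1
    have h1 : a / e ≤ δ ^ 2 := by
      rw [div_le_iff₀ he0]
      have hδC : 1 ≤ δ ^ 2 * C := by
        calc (1:ℝ) = δ ^ 2 * (δ⁻¹) ^ 2 := by field_simp
          _ ≤ δ ^ 2 * C := mul_le_mul_of_nonneg_left hC2 (by positivity)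
      have h2 : a ≤ δ ^ 2 * (C * a) := by
        have h2' := mul_le_mul_of_nonneg_right hδC ha0.le
        linarith [h2']
      have h3 : δ ^ 2 * (C * a) ≤ δ ^ 2 * e := mul_le_mul_of_nonneg_left heC (by positivity)
      linarith
    rw [hrdef, rhoL]
    calc Real.sqrt (Real.log L / |Real.log (η L)|) ≤ Real.sqrt (δ ^ 2) :=
          Real.sqrt_le_sqrt h1
      _ = δ := Real.sqrt_sq hδ0.le
  set t := e / 2 with htdef
  have ht0 : 0 ≤ t := by rw [htdef]; positivity
  have hN1 : 1 ≤ NL d L := one_le_NL' (by omega) hL3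
  have hNpos : 0 < NL d L := lt_of_lt_of_le one_pos hN1
  set B := (NL d L / L) ^ d with hBdef
  have hB0 : 0 ≤ B := by rw [hBdef]; positivity
  set ε := (Kb ^ d)⁻¹ * r * B with hεdef
  have hpet : η L * Real.exp t = Real.sqrt (η L) := by
    have h1 : Real.sqrt (η L) = Real.exp (Real.log (η L) * (1/2)) := by
      rw [Real.sqrt_eq_rpow, Real.rpow_def_of_pos hη0]
    rw [h1]
    nth_rewrite 1 [← Real.exp_log hη0]
    rw [← Real.exp_add]
    congr 1
    rw [htdef, habs]
    ring
  have hmb : (mL d c₄ L : ℝ) ≤ c₄ * B := by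
    rw [mL, ← hBdef]
    exact Nat.floor_le (by positivity)
  have hBle : B ≤ (L:ℝ) ^ (d*d) := by
    rw [hBdef, pow_mul]
    apply pow_le_pow_left₀ (by positivity)
    calc NL d L / L ≤ NL d L := div_le_self hNpos.le hL1.le
      _ ≤ (L:ℝ) ^ d := NL_le_pow' hL3
  have hsqη : Real.sqrt (η L) ≤ ((L:ℝ) ^ (d*d+1))⁻¹ := by
    have hηle : η L ≤ (((L:ℝ) ^ (d*d+1))⁻¹) ^ 2 := by
      have h1 : Real.log (η L) ≤ -(2*(d:ℝ)*d+2) * a := by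
        have h1' := mul_le_mul_of_nonneg_right hC1 ha0.le
        linarith
      have h2 : η L = Real.exp (Real.log (η L)) := (Real.exp_log hη0).symm
      rw [h2]
      calc Real.exp (Real.log (η L)) ≤ Real.exp (-(2*(d:ℝ)*d+2) * a) := Real.exp_le_exp.2 h1
        _ = (((L:ℝ) ^ (d*d+1))⁻¹) ^ 2 := by
            rw [show (-(2*(d:ℝ)*d+2) * a) = -(((2*(d*d+1) : ℕ) : ℝ) * a) by push_cast; ring,
              Real.exp_neg, Real.exp_nat_mul, Real.exp_log hL0, inv_pow, ← pow_mul]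
            congr 2
            ring
    calc Real.sqrt (η L) ≤ Real.sqrt ((((L:ℝ) ^ (d*d+1))⁻¹) ^ 2) := Real.sqrt_le_sqrt hηle
      _ = ((L:ℝ) ^ (d*d+1))⁻¹ := Real.sqrt_sq (by positivity)
  have hms : (mL d c₄ L : ℝ) * Real.sqrt (η L) ≤ 1 := by
    calc (mL d c₄ L : ℝ) * Real.sqrt (η L)
        ≤ (c₄ * (L:ℝ) ^ (d*d)) * ((L:ℝ) ^ (d*d+1))⁻¹ := by
          apply mul_le_mul (hmb.trans (mul_le_mul_of_nonneg_left hBle hc₄.le)) hsqη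
            (Real.sqrt_nonneg _) (by positivity)
      _ = c₄ / L := by
          rw [pow_succ]
          field_simp
      _ ≤ 1 := (div_le_one hL0).2 hLc
  set N' := NL d L ^ (d - 2) with hN'def
  have hkey : B * a = N' := by
    rw [hBdef, hadef, hN'def]
    exact NL_key' hd hL3
  have hN'1 : 1 ≤ N' := by
    rw [hN'def]
    exact one_le_pow₀ hN1
  have htε : t * ε = N' / (2 * r * Kb ^ d) := by
    rw [htdef, hεdef, ← hkey]
    have hre : r ^ 2 * e = a := by rw [hr2]; field_simp
    rw [eq_div_iff (by positivity)]
    field_simp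
    linear_combination (NL d L ^ d * ((L:ℝ)⁻¹) ^ d) * hre
  have hfinal : -t * ε + (mL d c₄ L : ℝ) * (η L * Real.exp t) ≤ -M * N' := by
    rw [hpet, neg_mul, htε]
    have habsM : (0:ℝ) < |M| + 1 := by positivity
    have h2 : 2 * r * Kb ^ d ≤ (|M| + 1)⁻¹ := by
      have heq : 2 * δ * Kb ^ d = (|M| + 1)⁻¹ := by
        rw [hδdef]
        field_simp
      calc 2 * r * Kb ^ d ≤ 2 * δ * Kb ^ d := by
            have := mul_le_mul_of_nonneg_right hrδ (show (0:ℝ) ≤ Kb ^ d by positivity)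
            linarith
        _ = (|M| + 1)⁻¹ := heq
    have h1 : (|M| + 1) * N' ≤ N' / (2 * r * Kb ^ d) := by
      rw [le_div_iff₀ (by positivity)]
      calc (|M| + 1) * N' * (2 * r * Kb ^ d) ≤ (|M| + 1) * N' * (|M| + 1)⁻¹ := by
            apply mul_le_mul_of_nonneg_left h2 (by positivity)
        _ = N' := by
            have hne : (|M| + 1) ≠ 0 := ne_of_gt habsM
            field_simp
    have hMabs : M * N' ≤ |M| * N' := mul_le_mul_of_nonneg_right (le_abs_self M) (by linarith)
    linarith [h1, hms, hN'1, hMabs]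
  have hcore := bernoulli_chernoff' (P L) (U L) (hUmeas L) (hUindep L) (η L) hη0.le hη1.le
    (hUdist L) (mL d c₄ L) t ε ht0
  rw [← ENNReal.ofReal_toReal (measure_ne_top (P L) _)]
  apply ENNReal.ofReal_le_ofReal
  refine hcore.trans ?_
  exact Real.exp_le_exp.2 hfinal
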